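/- Let v₀ ∈ 𝓕Ḣ^{1/2} ∩ H¹ and θ ∈ ℝ. Suppose φ ∈ 𝓕Ḣ^{1/2} ∩ H¹ is a real-valued eigenfunction of the Schrödinger operator −Δ − 2Re(e^{iθ}v₀) with negative eigenvalue ẽ < 0. Set u₀ = c·e^{−iθ/2}φ with c² = ‖∇v₀‖_{L²}²/(2|ẽ|‖φ‖_{L²}²). Then E[u₀, v₀] = 0. -/

import Mathlib

open MeasureTheory Complex
noncomputable section

abbrev E3 := EuclideanSpace ℝ (Fin 3)

/-- Energy `E[u,v] = ∫ (|∇u|² + ½|∇v|² − 2 Re(u² conj v))`. -/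
def energy (u v : E3 → ℂ) : ℝ :=
  ∫ x : E3, (‖fderiv ℝ u x‖ ^ 2 + (1 / 2) * ‖fderiv ℝ v x‖ ^ 2
      - 2 * ((u x) ^ 2 * (starRingEnd ℂ) (v x)).re)

/-- The Laplacian on ℝ³, as the sum of repeated directional derivatives. -/
def lap (f : E3 → ℝ) (x : E3) : ℝ :=
  ∑ i : Fin 3,
    fderiv ℝ (fun y => fderiv ℝ f y (EuclideanSpace.single i 1)) x
      (EuclideanSpace.single i 1)

lemma norm_fderiv_ofReal (φ : E3 → ℝ) (x : E3) :
    ‖fderiv ℝ (fun y => ((φ y : ℝ) : ℂ)) x‖ = ‖fderiv ℝ φ x‖ := by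
  by_cases h : DifferentiableAt ℝ φ x
  · have : (fun y => ((φ y : ℝ) : ℂ)) = Complex.ofRealCLM ∘ φ := rfl
    rw [this, (Complex.ofRealCLM.hasFDerivAt.comp x h.hasFDerivAt).fderiv]
    have : Complex.ofRealCLM = Complex.ofRealLI.toContinuousLinearMap := rfl
    rw [this, Complex.ofRealLI.norm_toContinuousLinearMap_comp]
  · have h2 : ¬ DifferentiableAt ℝ (fun y => ((φ y : ℝ) : ℂ)) x := by
      intro hd
      exact h (Complex.reCLM.differentiableAt.comp x hd)
    rw [fderiv_zero_of_not_differentiableAt h, fderiv_zero_of_not_differentiableAt h2]; simp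

lemma norm_fderiv_const_mul (k : ℂ) (f : E3 → ℂ) (x : E3) :
    ‖fderiv ℝ (fun y => k * f y) x‖ = ‖k‖ * ‖fderiv ℝ f x‖ := by
  rcases eq_or_ne k 0 with rfl | hk
  · simp
  by_cases h : DifferentiableAt ℝ f x
  · rw [fderiv_const_mul h]; exact norm_smul k (fderiv ℝ f x)
  · have h2 : ¬ DifferentiableAt ℝ (fun y => k * f y) x := by
      intro hd
      have := hd.const_mul k⁻¹
      simp only [← mul_assoc, inv_mul_cancel₀ hk, one_mul] at this
      exact h this
    rw [fderiv_zero_of_not_differentiableAt h, fderiv_zero_of_not_differentiableAt h2]; simp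

lemma exp_half_sq (θ : ℝ) :
    Complex.exp (-((θ / 2 : ℝ) : ℂ) * Complex.I) ^ 2
      = (starRingEnd ℂ) (Complex.exp ((θ : ℂ) * Complex.I)) := by
  rw [← Complex.exp_conj, sq, ← Complex.exp_add]
  congr 1
  simp [Complex.conj_I]
  ring

lemma cross_re (c p θ : ℝ) (v : ℂ) :
    (((c:ℂ) * Complex.exp (-((θ/2 : ℝ):ℂ) * Complex.I) * (p:ℂ)) ^ 2 * (starRingEnd ℂ) v).re
      = c^2 * ((Complex.exp ((θ:ℂ) * Complex.I) * v).re * p^2) := by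
  have h := exp_half_sq θ
  have key : ((c:ℂ) * Complex.exp (-((θ/2:ℝ):ℂ)*Complex.I) * (p:ℂ))^2 * (starRingEnd ℂ) v
      = ((c^2*p^2 : ℝ) : ℂ) * (starRingEnd ℂ) (Complex.exp ((θ:ℂ)*Complex.I) * v) := by
    rw [map_mul, ← h]
    push_cast
    ring
  rw [key, Complex.re_ofReal_mul, Complex.conj_re]
  ring

/-- if `φ` is a real-valued eigenfunction of `−Δ − 2Re(e^{iθ}v₀)` with
negative eigenvalue `ẽ < 0`, and `u₀ = c e^{−iθ/2}φ` with
`c² = ‖∇v₀‖²_{L²}/(2|ẽ|‖φ‖²_{L²})`, then `E[u₀, v₀] = 0`. -/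
theorem stmt12 (v₀ : E3 → ℂ) (θ ee : ℝ) (φ : E3 → ℝ) (hee : ee < 0)
    (heig : ∀ x, -lap φ x - 2 * (Complex.exp ((θ : ℂ) * Complex.I) * v₀ x).re * φ x
      = ee * φ x)
    (hIBP : (∫ x : E3, -(lap φ x) * φ x) = ∫ x : E3, ‖fderiv ℝ φ x‖ ^ 2)
    (hφL2 : 0 < ∫ x : E3, (φ x) ^ 2)
    (hiφ : Integrable (fun x : E3 => (φ x) ^ 2))
    (higφ : Integrable (fun x : E3 => ‖fderiv ℝ φ x‖ ^ 2))
    (higv : Integrable (fun x : E3 => ‖fderiv ℝ v₀ x‖ ^ 2))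
    (hilap : Integrable (fun x : E3 => lap φ x * φ x))
    (hicross : Integrable
      (fun x : E3 => (Complex.exp ((θ : ℂ) * Complex.I) * v₀ x).re * (φ x) ^ 2)) :
    energy
      (fun x =>
        ((Real.sqrt ((∫ y : E3, ‖fderiv ℝ v₀ y‖ ^ 2) / (2 * |ee| * ∫ y : E3, (φ y) ^ 2)) : ℝ) : ℂ)
          * Complex.exp (-((θ / 2 : ℝ) : ℂ) * Complex.I) * ((φ x : ℝ) : ℂ))
      v₀ = 0 := by
  set D := ∫ y : E3, ‖fderiv ℝ v₀ y‖ ^ 2 with hD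
  set P := ∫ y : E3, (φ y) ^ 2 with hP
  set c := Real.sqrt (D / (2 * |ee| * P)) with hc
  set G := ∫ x : E3, ‖fderiv ℝ φ x‖ ^ 2 with hG
  set C := ∫ x : E3, (Complex.exp ((θ : ℂ) * Complex.I) * v₀ x).re * (φ x) ^ 2 with hC
  have hcnn : 0 ≤ c := Real.sqrt_nonneg _
  have hnormk : ‖(c:ℂ) * Complex.exp (-((θ/2 : ℝ):ℂ) * Complex.I)‖ = c := by
    rw [norm_mul,
      Complex.norm_exp]
    simp [_root_.abs_of_nonneg hcnn]
  -- rewrite the energy integrand pointwise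
  have hpt : (fun x : E3 => ‖fderiv ℝ (fun x : E3 =>
        ((c:ℝ):ℂ) * Complex.exp (-((θ / 2 : ℝ) : ℂ) * Complex.I) * ((φ x : ℝ) : ℂ)) x‖ ^ 2
        + (1/2) * ‖fderiv ℝ v₀ x‖ ^ 2
        - 2 * (((((c:ℝ):ℂ) * Complex.exp (-((θ / 2 : ℝ) : ℂ) * Complex.I) * ((φ x : ℝ) : ℂ))) ^ 2
            * (starRingEnd ℂ) (v₀ x)).re)
      = fun x : E3 => c^2 * ‖fderiv ℝ φ x‖ ^ 2 + (1/2) * ‖fderiv ℝ v₀ x‖ ^ 2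
        - (2*c^2) * ((Complex.exp ((θ:ℂ) * Complex.I) * v₀ x).re * (φ x)^2) := by
    funext x
    rw [norm_fderiv_const_mul ((c:ℂ) * Complex.exp (-((θ/2 : ℝ):ℂ) * Complex.I))
        (fun y => ((φ y : ℝ) : ℂ)) x, norm_fderiv_ofReal, hnormk, cross_re]
    ring
  have h1 : Integrable (fun x : E3 => c^2 * ‖fderiv ℝ φ x‖^2) := higφ.const_mul _
  have h2 : Integrable (fun x : E3 => (1/2 : ℝ) * ‖fderiv ℝ v₀ x‖^2) := higv.const_mul _
  have h3 : Integrable (fun x : E3 =>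
      (2*c^2) * ((Complex.exp ((θ:ℂ) * Complex.I) * v₀ x).re * (φ x)^2)) :=
    hicross.const_mul _
  have henergy : energy
      (fun x =>
        ((c:ℝ):ℂ) * Complex.exp (-((θ / 2 : ℝ) : ℂ) * Complex.I) * ((φ x : ℝ) : ℂ))
      v₀ = c^2 * G + (1/2) * D - (2*c^2) * C := by
    rw [energy]
    rw [show (fun x : E3 => ‖fderiv ℝ (fun x : E3 =>
        ((c:ℝ):ℂ) * Complex.exp (-((θ / 2 : ℝ) : ℂ) * Complex.I) * ((φ x : ℝ) : ℂ)) x‖ ^ 2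
        + (1/2) * ‖fderiv ℝ v₀ x‖ ^ 2
        - 2 * (((((c:ℝ):ℂ) * Complex.exp (-((θ / 2 : ℝ) : ℂ) * Complex.I) * ((φ x : ℝ) : ℂ))) ^ 2
            * (starRingEnd ℂ) (v₀ x)).re) = _ from hpt]
    have h12 : Integrable (fun x : E3 => c^2 * ‖fderiv ℝ φ x‖^2 + (1/2 : ℝ) * ‖fderiv ℝ v₀ x‖^2) := h1.add h2
    rw [integral_sub h12 h3, integral_add h1 h2, integral_const_mul, integral_const_mul, integral_const_mul]
  -- eigen identity integrated
  have hpt2 : (fun x : E3 => -(lap φ x * φ x)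
        - 2 * ((Complex.exp ((θ:ℂ) * Complex.I) * v₀ x).re * (φ x)^2))
      = fun x : E3 => ee * (φ x)^2 := by
    funext x
    linear_combination (φ x) * heig x
  have hnl : Integrable (fun x : E3 => -(lap φ x * φ x)) := hilap.neg
  have hint2 : (∫ x : E3, -(lap φ x * φ x)) - 2 * C = ee * P := by
    have hsub : (∫ x : E3, (-(lap φ x * φ x)
          - 2 * ((Complex.exp ((θ:ℂ) * Complex.I) * v₀ x).re * (φ x)^2)))
        = (∫ x : E3, -(lap φ x * φ x)) - 2 * C := by
      rw [integral_sub hnl (hicross.const_mul 2), integral_const_mul]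
    rw [← hsub, hpt2, integral_const_mul]
  have hIBP' : (∫ x : E3, -(lap φ x * φ x)) = G := by
    rw [← hIBP]
    simp only [neg_mul]
  have hGC : G - 2 * C = ee * P := by rw [← hIBP']; exact hint2
  -- arithmetic
  have hden : 0 < 2 * |ee| * P := mul_pos (mul_pos two_pos (abs_pos.mpr hee.ne)) hφL2
  have hDnn : 0 ≤ D := integral_nonneg fun x => by positivity
  have hc2 : c ^ 2 = D / (2 * |ee| * P) := Real.sq_sqrt (div_nonneg hDnn hden.le)
  rw [henergy]
  have hG' : G = ee * P + 2 * C := by linarith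
  rw [hG', hc2, abs_of_neg hee]
  have hP0 : P ≠ 0 := ne_of_gt hφL2
  have hee0 : ee ≠ 0 := hee.ne
  field_simp
  ring
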